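/- If a weighted graph (Γ,μ) satisfies (p0), (VD) and (TC), then there are constants c>0 and β>1 such that the local sub-Gaussian kernel k̲=k̲(x,n,R) satisfies k̲+1 ≥ c·(E(x,R)/n)^{1/(β−1)} for all x∈Γ and all R,n>0. -/

import Mathlib

open Classical

noncomputable section

/-- A weighted graph: symmetric nonnegative edge weights, zero on the diagonal,
positive exactly on edges, with finitely many neighbours at each vertex. -/
structure WeightedGraph (V : Type*) where
  w : V → V → ℝ
  w_symm : ∀ x y, w x y = w y x
  w_nonneg : ∀ x y, 0 ≤ w x y
  w_irrefl : ∀ x, w x x = 0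
  locFin : ∀ x, {y | 0 < w x y}.Finite

/-- A space-time scale function is proper. -/
def properF (F : ℕ → ℝ) : Prop :=
  StrictMono F ∧
  (∃ D : ℝ, 0 < D ∧ ∀ R : ℕ, F (2 * R) ≤ D * F R) ∧
  (∀ R S : ℕ, F R + F S ≤ F (R + S)) ∧
  (∃ (A : ℕ) (B : ℝ), 1 < A ∧ 1 < B ∧ ∀ R : ℕ, B * F R ≤ F (A * R)) ∧
  (∃ c : ℝ, 0 < c ∧ ∀ R : ℕ, c * (R : ℝ) ^ 2 ≤ F R)

/-- A proper scale function satisfying the strong anti-doubling property `B_F > A_F`. -/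
def veryProperF (F : ℕ → ℝ) : Prop :=
  properF F ∧
  (∃ (A : ℕ) (B : ℝ), 1 < A ∧ (A : ℝ) < B ∧ ∀ R : ℕ, B * F R ≤ F (A * R))

/-- The (generalized) inverse of a scale function. -/
def finvF (F : ℕ → ℝ) (t : ℝ) : ℕ := sInf {R : ℕ | t ≤ F R}

/-- The sub-Gaussian kernel `k(n,R)`: the maximal integer `k ≥ 1` with
`n/k ≤ F(⌊R/k⌋)`, and `0` if there is none. -/
def kkerF (F : ℕ → ℝ) (n R : ℕ) : ℕ :=
  sSup {k : ℕ | 1 ≤ k ∧ (n : ℝ) / (k : ℝ) ≤ F (R / k)}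

namespace WeightedGraph

variable {V : Type*}

/-- The underlying simple graph. -/
def toSimpleGraph (G : WeightedGraph V) : SimpleGraph V where
  Adj x y := 0 < G.w x y
  symm := by
    constructor
    intro x y h
    rw [G.w_symm y x]
    exact h
  loopless := by
    constructor
    intro x h
    rw [G.w_irrefl x] at h
    exact lt_irrefl 0 h

/-- The graph (shortest path) distance. -/
def gdist (G : WeightedGraph V) (x y : V) : ℕ := G.toSimpleGraph.dist x y

/-- The open metric ball `B(x,r) = {y : d(x,y) < r}`. -/
def ball (G : WeightedGraph V) (x : V) (r : ℝ) : Set V := {y | (G.gdist x y : ℝ) < r}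

/-- The sphere `S(x,R) = {y : d(x,y) = R}`. -/
def sphere (G : WeightedGraph V) (x : V) (R : ℕ) : Set V := {y | G.gdist x y = R}

/-- The external boundary of a set. -/
def extBoundary (G : WeightedGraph V) (A : Set V) : Set V :=
  {y | y ∉ A ∧ ∃ x ∈ A, 0 < G.w x y}

/-- The vertex measure `μ(x) = Σ_{y ∼ x} μ_{xy}`. -/
def mu (G : WeightedGraph V) (x : V) : ℝ := ∑' y, G.w x y

/-- The volume `V(x,r) = μ(B(x,r))`. -/
def vol (G : WeightedGraph V) (x : V) (r : ℝ) : ℝ := ∑' y : G.ball x r, G.mu y.1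

/-- The volume of the annulus `v(x,s,r) = V(x,r) - V(x,s)`. -/
def annv (G : WeightedGraph V) (x : V) (s r : ℝ) : ℝ := G.vol x r - G.vol x s

/-- One-step transition probability `P(x,y) = μ_{xy}/μ(x)`. -/
def Pstep (G : WeightedGraph V) (x y : V) : ℝ := G.w x y / G.mu x

/-- `n`-step transition probability. -/
def Pn (G : WeightedGraph V) : ℕ → V → V → ℝ
  | 0, x, y => if x = y then 1 else 0
  | n + 1, x, y => ∑' z, G.Pstep x z * Pn G n z y

/-- The heat kernel `p_n(x,y) = P_n(x,y)/μ(y)`. -/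
def hk (G : WeightedGraph V) (n : ℕ) (x y : V) : ℝ := G.Pn n x y / G.mu y

/-- One step of the walk killed on exiting `A`. -/
def PstepA (G : WeightedGraph V) (A : Set V) (x y : V) : ℝ :=
  if x ∈ A ∧ y ∈ A then G.Pstep x y else 0

/-- `n`-step transition probability of the killed walk. -/
def PnA (G : WeightedGraph V) (A : Set V) : ℕ → V → V → ℝ
  | 0, x, y => if x = y ∧ x ∈ A then 1 else 0
  | n + 1, x, y => ∑' z, G.PstepA A x z * PnA G A n z y

/-- The local Green kernel `g^A(y,z) = (Σ_k P_k^A(y,z))/μ(z)`. -/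
def green (G : WeightedGraph V) (A : Set V) (y z : V) : ℝ :=
  (∑' k, G.PnA A k y z) / G.mu z

/-- The mean exit time `E_z(A) = Σ_{k≥0} P_z(T_A > k) = Σ_k Σ_{y} P_k^A(z,y)`. -/
def meanExit (G : WeightedGraph V) (A : Set V) (z : V) : ℝ :=
  ∑' (k : ℕ), ∑' (y : V), G.PnA A k z y

/-- `E(x,r)`: the mean exit time from the ball `B(x,r)` started at `x`. -/
def mexit (G : WeightedGraph V) (x : V) (r : ℝ) : ℝ := G.meanExit (G.ball x r) x

/-- `e(x,t) = min{R ∈ ℕ : E(x,R) ≥ t}`, the inverse of the mean exit time. -/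
def einv (G : WeightedGraph V) (x : V) (t : ℝ) : ℕ := sInf {R : ℕ | t ≤ G.mexit x R}

/-- `P(T_A < n)` for the walk started at `z`. -/
def exitProbLT (G : WeightedGraph V) (A : Set V) (z : V) (n : ℕ) : ℝ :=
  1 - ∑' y, G.PnA A (n - 1) z y

/-- The local sub-Gaussian kernel `k̲(x,n,R)`. -/
def lker (G : WeightedGraph V) (x : V) (n R : ℕ) : ℕ :=
  sSup {k : ℕ | 1 ≤ k ∧ (n : ℝ) / (k : ℝ) ≤ ⨅ y : G.ball x R, G.mexit y.1 ((R / k : ℕ) : ℝ)}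

/-- `u` is harmonic on `A`. -/
def Harmonic (G : WeightedGraph V) (A : Set V) (u : V → ℝ) : Prop :=
  ∀ x ∈ A, (∑' y, G.Pstep x y * u y) = u x

/-- The Dirichlet form (energy). -/
def dirichletEnergy (G : WeightedGraph V) (f : V → ℝ) : ℝ :=
  (1 / 2) * ∑' p : V × V, G.w p.1 p.2 * (f p.1 - f p.2) ^ 2

/-- The resistance between two disjoint sets. -/
def resistance (G : WeightedGraph V) (A B : Set V) : ℝ :=
  (sInf (G.dirichletEnergy '' {f | (∀ x ∈ A, f x = 1) ∧ ∀ x ∈ B, f x = 0}))⁻¹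

/-- The resistance of the annulus `ρ(x,s,r) = ρ(B(x,s), Γ∖B(x,r))`. -/
def rho (G : WeightedGraph V) (x : V) (s r : ℝ) : ℝ :=
  G.resistance (G.ball x s) (G.ball x r)ᶜ

/-- The kernel of the `(λ,m)`-resolvent `((λ+1)I - P)^{-m}`. -/
def resolventKer (G : WeightedGraph V) (lam : ℝ) (m : ℕ) (x y : V) : ℝ :=
  (∑' k : ℕ, (Nat.choose (k + m - 1) k : ℝ) * (1 + lam) ^ (-((m : ℤ) + (k : ℤ))) * G.Pn k x y) /
    G.mu y

/-- `F(R) = inf_x E(x,R)`. -/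
def Fm (G : WeightedGraph V) (R : ℕ) : ℝ := ⨅ x : V, G.mexit x R

/-- Condition `(p0)`: controlled weights. -/
def P0 (G : WeightedGraph V) (p0 : ℝ) : Prop :=
  ∀ x y : V, 0 < G.w x y → p0 ≤ G.w x y / G.mu x

/-- Condition `(VD)`: volume doubling. -/
def VD (G : WeightedGraph V) : Prop :=
  ∃ D : ℝ, 0 < D ∧ ∀ (x : V) (R : ℝ), 0 < R → G.vol x (2 * R) ≤ D * G.vol x R

/-- Condition `(TC)`: the time comparison principle. -/
def TC (G : WeightedGraph V) : Prop :=
  ∃ C : ℝ, 1 < C ∧ ∀ (x : V) (R : ℝ), 0 < R → ∀ y ∈ G.ball x R,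
    G.mexit x (2 * R) ≤ C * G.mexit y R

/-- Condition `(TD)`: time doubling. -/
def TD (G : WeightedGraph V) : Prop :=
  ∃ D : ℝ, 0 < D ∧ ∀ (x : V) (R : ℝ), 0 ≤ R → G.mexit x (2 * R) ≤ D * G.mexit x R

/-- Condition `(E)`: the mean exit time is uniform in the space. -/
def UniformE (G : WeightedGraph V) : Prop :=
  ∃ C : ℝ, 1 < C ∧ ∀ (x y : V) (R : ℝ), 0 < R → G.mexit x R ≤ C * G.mexit y R

/-- The mean value inequality `(MV)`. -/
def MV (G : WeightedGraph V) : Prop :=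
  ∃ C : ℝ, 0 < C ∧ ∀ (x : V) (R : ℝ) (u : V → ℝ), 0 < R → (∀ y, 0 ≤ u y) →
    G.Harmonic (G.ball x R) u →
    u x ≤ C / G.vol x R * ∑' y : G.ball x R, u y.1 * G.mu y.1

/-- The local diagonal upper estimate `(DUE)`. -/
def DUE (G : WeightedGraph V) : Prop :=
  ∃ C : ℝ, 0 < C ∧ ∀ (x : V) (n : ℕ), 0 < n →
    G.hk n x x ≤ C / G.vol x (G.einv x n)

/-- The off-diagonal upper estimate `(UE)`. -/
def UE (G : WeightedGraph V) : Prop :=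
  ∃ C β c : ℝ, 0 < C ∧ 1 < β ∧ 0 < c ∧ ∀ (x y : V) (n : ℕ), 0 < n →
    G.hk n x y ≤ C / G.vol x (G.einv x n) *
      Real.exp (-(c * (G.mexit x (G.gdist x y) / n) ^ ((1 : ℝ) / (β - 1))))

/-- A nonnegative Dirichlet solution of the heat equation `P^A u_n = u_{n+1}` up to time `N`. -/
def DirSol (G : WeightedGraph V) (A : Set V) (N : ℕ) (u : ℕ → V → ℝ) : Prop :=
  (∀ n y, 0 ≤ u n y) ∧ ∀ n, n < N → ∀ z ∈ A, (∑' y, G.PstepA A z y * u n y) = u (n + 1) z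

/-- The parabolic mean value inequality `(PMV)`. -/
def PMV (G : WeightedGraph V) : Prop :=
  ∃ c1 c2 C : ℝ, 0 ≤ c1 ∧ c1 < c2 ∧ 1 < C ∧
    ∀ (x : V) (R : ℝ) (u : ℕ → V → ℝ), 0 < R →
      G.DirSol (G.ball x R) ⌊c2 * G.mexit x R⌋₊ u →
      u ⌊c2 * G.mexit x R⌋₊ x ≤ C / (G.vol x R * G.mexit x R) *
        ∑ i ∈ Finset.Icc ⌊c1 * G.mexit x R⌋₊ ⌊c2 * G.mexit x R⌋₊,
          ∑' y : G.ball x R, u i y.1 * G.mu y.1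

/-- The skewed parabolic mean value inequality. -/
def SPMV (G : WeightedGraph V) : Prop :=
  ∃ c1 c2 C : ℝ, 0 < c1 ∧ c1 < c2 ∧ 1 ≤ C ∧
    ∀ (x : V) (R : ℝ) (y : V) (u : ℕ → V → ℝ), 0 < R → y ∈ G.ball x R →
      G.DirSol (G.ball x R) ⌊c2 * G.mexit x R⌋₊ u →
      u ⌊c2 * G.mexit x R⌋₊ x ≤ C / (G.vol y (2 * R) * G.mexit y (2 * R)) *
        ∑ i ∈ Finset.Icc ⌊c1 * G.mexit x R⌋₊ ⌊c2 * G.mexit x R⌋₊,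
          ∑' z : G.ball x R, u i z.1 * G.mu z.1

/-- The mean value property for Green kernels `(MVG)`. -/
def MVG (G : WeightedGraph V) : Prop :=
  ∃ C : ℝ, 1 < C ∧ ∀ (x : V) (R : ℝ) (y : V), 0 < R → 0 < G.gdist x y →
    G.green (G.ball x R) y x ≤ C / G.vol x (G.gdist x y) *
      ∑' z : G.ball x (G.gdist x y : ℝ), G.green (G.ball x R) y z.1 * G.mu z.1

/-- The Green kernel bound `(g01)`: `g^B(y,x) ≤ C·E(x,R)/V(x,d(x,y))`. -/
def G01 (G : WeightedGraph V) : Prop :=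
  ∃ C : ℝ, 1 < C ∧ ∀ (x : V) (R : ℝ) (y : V), 0 < R → 0 < G.gdist x y →
    G.green (G.ball x R) y x ≤ C * G.mexit x R / G.vol x (G.gdist x y)

/-- The elliptic Harnack inequality `(H)`. -/
def EH (G : WeightedGraph V) : Prop :=
  ∃ C : ℝ, 0 < C ∧ ∀ (x : V) (R : ℝ) (u : V → ℝ), 0 < R → (∀ y, 0 ≤ u y) →
    G.Harmonic (G.ball x (2 * R)) u → ∀ y ∈ G.ball x R, ∀ z ∈ G.ball x R, u y ≤ C * u z

/-- The sub-Gaussian upper estimate `(UE_F)` with respect to `F`. -/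
def UEF (G : WeightedGraph V) (F : ℕ → ℝ) : Prop :=
  ∃ C c : ℝ, 0 < C ∧ 0 < c ∧ ∀ (x y : V) (n : ℕ), 0 < n →
    G.hk n x y ≤ C / G.vol x (finvF F n) *
      Real.exp (-(c * (kkerF F n (G.gdist x y) : ℝ)))

/-- The sub-Gaussian lower estimate `(LE_F)` with respect to `F`. -/
def LEF (G : WeightedGraph V) (F : ℕ → ℝ) : Prop :=
  ∃ c C : ℝ, 0 < c ∧ 0 < C ∧ ∀ (x y : V) (n : ℕ), 0 < n →
    c / G.vol x (finvF F n) * Real.exp (-(C * (kkerF F n (G.gdist x y) : ℝ))) ≤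
      G.hk n x y + G.hk (n + 1) x y

/-- The `F`-parabolic Harnack inequality. -/
def PHF (G : WeightedGraph V) (F : ℕ → ℝ) : Prop :=
  ∀ c1 c2 c3 c4 η : ℝ, 0 < c1 → c1 < c2 → c2 < c3 → c3 < c4 → 0 < η → η < 1 →
    ∃ CH : ℝ, 0 < CH ∧ ∀ (x : V) (R k : ℕ) (u : ℕ → V → ℝ), 0 < R →
      (∀ n y, 0 ≤ u n y) →
      (∀ n : ℕ, k ≤ n → (n : ℝ) < (k : ℝ) + F ⌊c4 * (R : ℝ)⌋₊ → ∀ z ∈ G.ball x R,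
        (∑' y, G.Pstep z y * u n y) = u (n + 1) z) →
      ∀ (nm np : ℕ), ∀ xm ∈ G.ball x (η * R), ∀ xp ∈ G.ball x (η * R),
        (k : ℝ) + F ⌊c1 * (R : ℝ)⌋₊ ≤ (nm : ℝ) → (nm : ℝ) ≤ (k : ℝ) + F ⌊c2 * (R : ℝ)⌋₊ →
        (k : ℝ) + F ⌊c3 * (R : ℝ)⌋₊ ≤ (np : ℝ) → (np : ℝ) ≤ (k : ℝ) + F ⌊c4 * (R : ℝ)⌋₊ →
        (G.gdist xm xp : ℝ) ≤ (np : ℝ) - (nm : ℝ) →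
        u nm xm ≤ CH * (u np xp + u (np + 1) xp)

end WeightedGraph

open WeightedGraph

namespace WeightedGraph

section Helpers

variable {V : Type*} (G : WeightedGraph V)

lemma w_supp (x : V) : ∀ y ∉ (G.locFin x).toFinset, G.w x y = 0 := by
  intro y hy
  rw [Set.Finite.mem_toFinset] at hy
  exact le_antisymm (not_lt.mp hy) (G.w_nonneg x y)

lemma mu_eq_sum (x : V) : G.mu x = ∑ y ∈ (G.locFin x).toFinset, G.w x y :=
  tsum_eq_sum (G.w_supp x)

lemma mu_nonneg (x : V) : 0 ≤ G.mu x :=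
  tsum_nonneg fun y => G.w_nonneg x y

lemma Pstep_nonneg (x y : V) : 0 ≤ G.Pstep x y :=
  div_nonneg (G.w_nonneg x y) (G.mu_nonneg x)

lemma Pstep_supp (x : V) : ∀ y ∉ (G.locFin x).toFinset, G.Pstep x y = 0 := by
  intro y hy
  unfold Pstep
  rw [G.w_supp x y hy, zero_div]

lemma Pstep_sum_le_one (x : V) : ∑ y ∈ (G.locFin x).toFinset, G.Pstep x y ≤ 1 := by
  unfold Pstep
  rw [← Finset.sum_div, ← G.mu_eq_sum]
  rcases eq_or_lt_of_le (G.mu_nonneg x) with h | h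
  · rw [← h, div_zero]; norm_num
  · rw [div_self h.ne']

lemma Pstep_sum_eq_one (x : V) (hx : ∃ y, 0 < G.w x y) :
    ∑ y ∈ (G.locFin x).toFinset, G.Pstep x y = 1 := by
  obtain ⟨y, hy⟩ := hx
  have hmu : 0 < G.mu x := by
    rw [G.mu_eq_sum]
    refine Finset.sum_pos' (fun z _ => G.w_nonneg x z) ⟨y, ?_, hy⟩
    rw [Set.Finite.mem_toFinset]; exact hy
  unfold Pstep
  rw [← Finset.sum_div, ← G.mu_eq_sum, div_self hmu.ne']

lemma exists_adj (hconn : G.toSimpleGraph.Connected) [Infinite V] (x : V) :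
    ∃ y, 0 < G.w x y := by
  obtain ⟨y, hy⟩ := exists_ne x
  obtain ⟨p⟩ := hconn.preconnected x y
  match p with
  | .nil => exact absurd rfl hy.symm
  | .cons h _ => exact ⟨_, h⟩

lemma p0_le_one (hconn : G.toSimpleGraph.Connected) [Infinite V]
    {p0 : ℝ} (hP0 : G.P0 p0) (x : V) : p0 ≤ 1 := by
  obtain ⟨y, hy⟩ := G.exists_adj hconn x
  refine (hP0 x y hy).trans ?_
  have hym : y ∈ (G.locFin x).toFinset := by rw [Set.Finite.mem_toFinset]; exact hy
  have h1 : G.Pstep x y ≤ ∑ z ∈ (G.locFin x).toFinset, G.Pstep x z :=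
    Finset.single_le_sum (fun z _ => G.Pstep_nonneg x z) hym
  exact h1.trans (G.Pstep_sum_le_one x)

lemma tsum_ne_zero_witness {f : V → ℝ} (h : ∑' y, f y ≠ 0) : ∃ y, f y ≠ 0 := by
  by_contra hc
  push_neg at hc
  exact h (by rw [tsum_congr hc, tsum_zero])

section Killed

variable {A : Set V} (hA : A.Finite)

lemma PstepA_nonneg (z w : V) : 0 ≤ G.PstepA A z w := by
  unfold PstepA
  split
  · exact G.Pstep_nonneg z w
  · exact le_rfl

lemma PstepA_le_Pstep (z w : V) : G.PstepA A z w ≤ G.Pstep z w := by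
  unfold PstepA
  split
  · exact le_rfl
  · exact G.Pstep_nonneg z w

lemma PstepA_of_not_mem_left {z : V} (hz : z ∉ A) (w : V) : G.PstepA A z w = 0 := by
  unfold PstepA
  rw [if_neg (fun h => hz h.1)]

lemma PstepA_supp (z : V) : ∀ w ∉ hA.toFinset, G.PstepA A z w = 0 := by
  intro w hw
  rw [Set.Finite.mem_toFinset] at hw
  unfold PstepA
  rw [if_neg (fun h => hw h.2)]

lemma PnA_nonneg (k : ℕ) (z y : V) : 0 ≤ G.PnA A k z y := by
  induction k generalizing z y with
  | zero => unfold PnA; split <;> norm_num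
  | succ k ih =>
      exact tsum_nonneg fun w => mul_nonneg (G.PstepA_nonneg z w) (ih w y)

lemma PnA_mem_of_ne_zero {k : ℕ} {z y : V} (h : G.PnA A k z y ≠ 0) : y ∈ A := by
  induction k generalizing z with
  | zero =>
      unfold PnA at h
      by_cases hc : z = y ∧ z ∈ A
      · exact hc.1 ▸ hc.2
      · rw [if_neg hc] at h; exact absurd rfl h
  | succ k ih =>
      obtain ⟨w, hw⟩ := tsum_ne_zero_witness (f := fun w => G.PstepA A z w * G.PnA A k w y) h
      exact ih (right_ne_zero_of_mul hw)

lemma PnA_supp (k : ℕ) (z : V) : ∀ y ∉ hA.toFinset, G.PnA A k z y = 0 := by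
  intro y hy
  rw [Set.Finite.mem_toFinset] at hy
  by_contra hc
  exact hy (G.PnA_mem_of_ne_zero hc)

/-- Survival probability at time `k`. -/
def surv (A : Set V) (k : ℕ) (z : V) : ℝ := ∑' y, G.PnA A k z y

lemma meanExit_eq (z : V) : G.meanExit A z = ∑' k, G.surv A k z := rfl

lemma surv_nonneg (k : ℕ) (z : V) : 0 ≤ G.surv A k z :=
  tsum_nonneg fun y => G.PnA_nonneg k z y

lemma surv_eq_sum (k : ℕ) (z : V) :
    G.surv A k z = ∑ y ∈ hA.toFinset, G.PnA A k z y :=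
  tsum_eq_sum (G.PnA_supp hA k z)

lemma surv_zero (z : V) : G.surv A 0 z = if z ∈ A then 1 else 0 := by
  have : ∀ y ∉ ({z} : Finset V), G.PnA A 0 z y = 0 := by
    intro y hy
    rw [Finset.mem_singleton] at hy
    unfold PnA
    rw [if_neg (fun h => hy h.1.symm)]
  rw [surv, tsum_eq_sum this, Finset.sum_singleton]
  unfold PnA
  by_cases h : z ∈ A
  · rw [if_pos ⟨rfl, h⟩, if_pos h]
  · rw [if_neg (fun hc => h hc.2), if_neg h]

lemma surv_succ (k : ℕ) (z : V) :
    G.surv A (k + 1) z = ∑ w ∈ hA.toFinset, G.PstepA A z w * G.surv A k w := by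
  have hinner : ∀ y : V, G.PnA A (k + 1) z y
      = ∑ w ∈ hA.toFinset, G.PstepA A z w * G.PnA A k w y := by
    intro y
    exact tsum_eq_sum (fun w hw => by rw [G.PstepA_supp hA z w hw, zero_mul])
  have houter : ∀ y ∉ hA.toFinset,
      (∑ w ∈ hA.toFinset, G.PstepA A z w * G.PnA A k w y) = 0 := by
    intro y hy
    exact Finset.sum_eq_zero fun w _ => by rw [G.PnA_supp hA k w y hy, mul_zero]
  calc G.surv A (k + 1) z
      = ∑ y ∈ hA.toFinset, ∑ w ∈ hA.toFinset, G.PstepA A z w * G.PnA A k w y := by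
        rw [surv, tsum_congr hinner, tsum_eq_sum houter]
    _ = ∑ w ∈ hA.toFinset, ∑ y ∈ hA.toFinset, G.PstepA A z w * G.PnA A k w y :=
        Finset.sum_comm
    _ = ∑ w ∈ hA.toFinset, G.PstepA A z w * G.surv A k w := by
        refine Finset.sum_congr rfl fun w _ => ?_
        rw [← Finset.mul_sum, ← G.surv_eq_sum hA]

include hA in
lemma surv_of_not_mem {z : V} (hz : z ∉ A) (k : ℕ) : G.surv A k z = 0 := by
  cases k with
  | zero => rw [G.surv_zero, if_neg hz]
  | succ k =>
      rw [G.surv_succ hA]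
      exact Finset.sum_eq_zero fun w _ => by
        rw [G.PstepA_of_not_mem_left hz, zero_mul]

include hA in
lemma surv_le_one (k : ℕ) (z : V) : G.surv A k z ≤ 1 := by
  induction k generalizing z with
  | zero => rw [G.surv_zero]; split <;> norm_num
  | succ k ih =>
      rw [G.surv_succ hA]
      calc ∑ w ∈ hA.toFinset, G.PstepA A z w * G.surv A k w
          ≤ ∑ w ∈ hA.toFinset, G.Pstep z w := by
            refine Finset.sum_le_sum fun w _ => ?_
            calc G.PstepA A z w * G.surv A k w
                ≤ G.PstepA A z w * 1 :=
                  mul_le_mul_of_nonneg_left (ih w) (G.PstepA_nonneg z w)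
              _ = G.PstepA A z w := mul_one _
              _ ≤ G.Pstep z w := G.PstepA_le_Pstep z w
        _ ≤ ∑ w ∈ (G.locFin z).toFinset, G.Pstep z w := by
            rw [← tsum_eq_sum (L := SummationFilter.unconditional V) (G.Pstep_supp z)]
            exact Summable.sum_le_tsum _ (fun w _ => G.Pstep_nonneg z w)
              (summable_of_ne_finset_zero (G.Pstep_supp z))
        _ ≤ 1 := G.Pstep_sum_le_one z

include hA in
lemma surv_succ_le (k : ℕ) (z : V) : G.surv A (k + 1) z ≤ G.surv A k z := by
  induction k generalizing z with
  | zero =>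
      by_cases hz : z ∈ A
      · rw [G.surv_zero, if_pos hz]; exact G.surv_le_one hA 1 z
      · rw [G.surv_of_not_mem hA hz, G.surv_of_not_mem hA hz]
  | succ k ih =>
      rw [G.surv_succ hA (k+1), G.surv_succ hA k]
      exact Finset.sum_le_sum fun w _ =>
        mul_le_mul_of_nonneg_left (ih w) (G.PstepA_nonneg z w)

include hA in
lemma surv_anti {k k' : ℕ} (h : k ≤ k') (z : V) : G.surv A k' z ≤ G.surv A k z := by
  induction k' with
  | zero => rw [Nat.le_zero.mp h]
  | succ k' ih =>
      rcases Nat.lt_or_ge k (k' + 1) with h' | h'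
      · exact (G.surv_succ_le hA k' z).trans (ih (Nat.lt_succ_iff.mp h'))
      · rw [Nat.le_antisymm h h']

include hA in
lemma surv_add_le {M : ℝ} (hM : 0 ≤ M) {k : ℕ} (hk : 1 ≤ k)
    (h : ∀ w ∈ A, G.surv A k w ≤ M) (m : ℕ) :
    ∀ z, G.surv A (k + m) z ≤ M * G.surv A m z := by
  induction m with
  | zero =>
      intro z
      by_cases hz : z ∈ A
      · rw [G.surv_zero, if_pos hz, mul_one]; exact h z hz
      · rw [Nat.add_zero, G.surv_of_not_mem hA hz, G.surv_of_not_mem hA hz, mul_zero]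
  | succ m ih =>
      intro z
      rw [show k + (m + 1) = (k + m) + 1 by ring, G.surv_succ hA, G.surv_succ hA m,
        Finset.mul_sum]
      refine Finset.sum_le_sum fun w _ => ?_
      calc G.PstepA A z w * G.surv A (k + m) w
          ≤ G.PstepA A z w * (M * G.surv A m w) :=
            mul_le_mul_of_nonneg_left (ih w) (G.PstepA_nonneg z w)
        _ = M * (G.PstepA A z w * G.surv A m w) := by ring

end Killed

section FullWalk

variable (hconn : G.toSimpleGraph.Connected)

include hconn in
lemma dist_zero_imp {x y : V} (h : G.toSimpleGraph.dist x y = 0) : x = y := by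
  rcases SimpleGraph.dist_eq_zero_iff_eq_or_not_reachable.mp h with h' | h'
  · exact h'
  · exact absurd (hconn.preconnected x y) h'

include hconn in
lemma distLE_finite (x : V) (m : ℕ) : {y | G.toSimpleGraph.dist x y ≤ m}.Finite := by
  induction m with
  | zero =>
      refine (Set.finite_singleton x).subset ?_
      intro y hy
      simp only [Set.mem_setOf_eq, Nat.le_zero] at hy
      exact (G.dist_zero_imp hconn hy).symm ▸ rfl
  | succ m ih =>
      refine (ih.union (ih.biUnion (fun z _ => G.locFin z))).subset ?_
      intro y hy
      simp only [Set.mem_setOf_eq] at hy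
      rcases Nat.lt_or_ge (G.toSimpleGraph.dist x y) (m + 1) with h | h
      · exact Or.inl (Nat.lt_succ_iff.mp h)
      · have hd : G.toSimpleGraph.dist x y = m + 1 := le_antisymm hy h
        have hne : y ≠ x := by
          intro he
          rw [he, SimpleGraph.dist_self] at hd
          exact Nat.succ_ne_zero m hd.symm
        obtain ⟨p, hp⟩ := hconn.exists_walk_length_eq_dist x y
        obtain ⟨z, hadj, q, hq⟩ := SimpleGraph.Walk.exists_eq_cons_of_ne hne p.reverse
        have hql : q.length = m := by
          have := p.length_reverse
          rw [hq] at this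
          simp only [SimpleGraph.Walk.length_cons] at this
          omega
        refine Or.inr (Set.mem_biUnion (x := z) ?_ ?_)
        · show G.toSimpleGraph.dist x z ≤ m
          calc G.toSimpleGraph.dist x z = G.toSimpleGraph.dist z x :=
                SimpleGraph.dist_comm
            _ ≤ q.length := SimpleGraph.dist_le q
            _ = m := hql
        · show 0 < G.w z y
          rw [G.w_symm]
          exact hadj

lemma Pn_nonneg (m : ℕ) (z y : V) : 0 ≤ G.Pn m z y := by
  induction m generalizing z y with
  | zero => unfold Pn; split <;> norm_num
  | succ m ih =>
      exact tsum_nonneg fun w => mul_nonneg (G.Pstep_nonneg z w) (ih w y)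

include hconn in
lemma Pn_supp (m : ℕ) (z : V) :
    ∀ y ∉ (G.distLE_finite hconn z m).toFinset, G.Pn m z y = 0 := by
  induction m generalizing z with
  | zero =>
      intro y hy
      rw [Set.Finite.mem_toFinset] at hy
      simp only [Set.mem_setOf_eq, Nat.le_zero] at hy
      unfold Pn
      refine if_neg (fun h : z = y => hy ?_)
      rw [← h, SimpleGraph.dist_self]
  | succ m ih =>
      intro y hy
      rw [Set.Finite.mem_toFinset] at hy
      simp only [Set.mem_setOf_eq, not_le] at hy
      have hterm : ∀ w, G.Pstep z w * G.Pn m w y = 0 := by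
        intro w
        by_cases hw : G.Pstep z w = 0
        · rw [hw, zero_mul]
        · have hadj : 0 < G.w z w := by
            rcases lt_or_eq_of_le (G.w_nonneg z w) with h | h
            · exact h
            · exact absurd (by unfold Pstep; rw [← h, zero_div]) hw
          have hwy : G.Pn m w y = 0 := by
            refine ih w y ?_
            intro hmem
            rw [Set.Finite.mem_toFinset] at hmem
            simp only [Set.mem_setOf_eq] at hmem
            have h1 : G.toSimpleGraph.dist z w ≤ 1 := by
              have := SimpleGraph.dist_le
                (SimpleGraph.Walk.cons (show G.toSimpleGraph.Adj z w from hadj)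
                  SimpleGraph.Walk.nil)
              simpa using this
            have h2 := hconn.dist_triangle (u := z) (v := w) (w := y)
            omega
          rw [hwy, mul_zero]
      show (∑' w, G.Pstep z w * G.Pn m w y) = 0
      rw [tsum_congr hterm, tsum_zero]

include hconn in
lemma Pn_sum_eq_one [Infinite V] (m : ℕ) (z : V) : ∑' y, G.Pn m z y = 1 := by
  induction m generalizing z with
  | zero =>
      have hsupp : ∀ y ∉ ({z} : Finset V), G.Pn 0 z y = 0 := by
        intro y hy
        rw [Finset.mem_singleton] at hy
        unfold Pn
        rw [if_neg (fun h => hy h.symm)]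
      rw [tsum_eq_sum hsupp, Finset.sum_singleton]
      unfold Pn
      rw [if_pos rfl]
  | succ m ih =>
      classical
      set nb : Finset V := (G.locFin z).toFinset with hnb
      set T : Finset V := nb.biUnion (fun w => (G.distLE_finite hconn w m).toFinset)
        with hT
      have hinner : ∀ y : V, G.Pn (m + 1) z y = ∑ w ∈ nb, G.Pstep z w * G.Pn m w y := by
        intro y
        exact tsum_eq_sum (fun w hw => by rw [G.Pstep_supp z w hw, zero_mul])
      have houter : ∀ y ∉ T, (∑ w ∈ nb, G.Pstep z w * G.Pn m w y) = 0 := by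
        intro y hy
        refine Finset.sum_eq_zero fun w hw => ?_
        have : y ∉ (G.distLE_finite hconn w m).toFinset := by
          intro hc
          exact hy (Finset.mem_biUnion.mpr ⟨w, hw, hc⟩)
        rw [G.Pn_supp hconn m w y this, mul_zero]
      calc (∑' y, G.Pn (m + 1) z y)
          = ∑ y ∈ T, ∑ w ∈ nb, G.Pstep z w * G.Pn m w y := by
            rw [tsum_congr hinner, tsum_eq_sum houter]
        _ = ∑ w ∈ nb, ∑ y ∈ T, G.Pstep z w * G.Pn m w y := Finset.sum_comm
        _ = ∑ w ∈ nb, G.Pstep z w := by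
            refine Finset.sum_congr rfl fun w hw => ?_
            rw [← Finset.mul_sum]
            have hsub : ∀ y ∉ T, G.Pn m w y = 0 := by
              intro y hy
              refine G.Pn_supp hconn m w y ?_
              intro hc
              exact hy (Finset.mem_biUnion.mpr ⟨w, hw, hc⟩)
            rw [← tsum_eq_sum (L := SummationFilter.unconditional V) hsub, ih w, mul_one]
        _ = 1 := G.Pstep_sum_eq_one z (G.exists_adj hconn z)

lemma PnA_le_Pn {A : Set V} (hA : A.Finite) (m : ℕ) (z y : V) :
    G.PnA A m z y ≤ G.Pn m z y := by
  induction m generalizing z y with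
  | zero =>
      unfold PnA Pn
      split
      · rename_i h; rw [if_pos h.1]
      · split <;> norm_num
  | succ m ih =>
      refine Summable.tsum_le_tsum (fun w => ?_) ?_ ?_
      · exact mul_le_mul (G.PstepA_le_Pstep z w) (ih w y) (G.PnA_nonneg m w y)
          (G.Pstep_nonneg z w)
      · refine summable_of_ne_finset_zero (s := hA.toFinset) fun w hw => ?_
        rw [G.PstepA_supp hA z w hw, zero_mul]
      · refine summable_of_ne_finset_zero (s := (G.locFin z).toFinset) fun w hw => ?_
        rw [G.Pstep_supp z w hw, zero_mul]

lemma Pn_walk_lb {p0 : ℝ} (hp0 : 0 ≤ p0) (hP0 : G.P0 p0) {z u : V}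
    (p : G.toSimpleGraph.Walk z u) : p0 ^ p.length ≤ G.Pn p.length z u := by
  induction p with
  | nil =>
      simp only [SimpleGraph.Walk.length_nil, pow_zero]
      unfold Pn
      rw [if_pos rfl]
  | @cons a b c h q ih =>
      simp only [SimpleGraph.Walk.length_cons]
      have hterm : p0 ^ (q.length + 1) ≤ G.Pstep a b * G.Pn q.length b c := by
        rw [pow_succ, mul_comm (p0 ^ q.length) p0]
        exact mul_le_mul (hP0 a b h) ih (pow_nonneg hp0 _) (G.Pstep_nonneg a b)
      refine hterm.trans ?_
      refine Summable.le_tsum ?_ b (fun w _ => mul_nonneg (G.Pstep_nonneg a w) (G.Pn_nonneg _ w c))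
      refine summable_of_ne_finset_zero (s := (G.locFin a).toFinset) fun w hw => ?_
      rw [G.Pstep_supp a w hw, zero_mul]

end FullWalk

section Escape

variable {A : Set V} (hA : A.Finite) (hconn : G.toSimpleGraph.Connected)

lemma escape_walk (s : Finset V) {z u : V} (p : G.toSimpleGraph.Walk z u)
    (hp : p.IsPath) (hsupp : ∀ v ∈ p.support, v ∈ A → v ∈ s)
    (hz : z ∈ A) (hu : u ∉ A) :
    ∃ (u' : V) (q : G.toSimpleGraph.Walk z u'), u' ∉ A ∧ q.length ≤ s.card := by
  induction p generalizing s with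
  | nil => exact absurd hz hu
  | @cons a b c h p ih =>
      have hzs : a ∈ s := hsupp a (SimpleGraph.Walk.start_mem_support _) hz
      by_cases hb : b ∈ A
      · have hp' : p.IsPath := ((SimpleGraph.Walk.cons_isPath_iff h p).mp hp).1
        have hans : a ∉ p.support := ((SimpleGraph.Walk.cons_isPath_iff h p).mp hp).2
        obtain ⟨u', q', hu', hq'⟩ := ih (s.erase a) hp' (fun v hv hvA => by
          refine Finset.mem_erase.mpr ⟨?_, hsupp v (by simp [hv]) hvA⟩
          intro he
          exact hans (he ▸ hv)) hb hu
        refine ⟨u', SimpleGraph.Walk.cons h q', hu', ?_⟩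
        have := Finset.card_erase_add_one hzs
        simp only [SimpleGraph.Walk.length_cons]
        omega
      · exact ⟨b, SimpleGraph.Walk.cons h SimpleGraph.Walk.nil, hb, by
          simpa using Finset.card_pos.mpr ⟨a, hzs⟩⟩

include hA hconn in
lemma surv_card_le [Infinite V] {p0 : ℝ} (hp0 : 0 < p0) (hP0 : G.P0 p0)
    {z : V} (hz : z ∈ A) :
    G.surv A hA.toFinset.card z ≤ 1 - p0 ^ hA.toFinset.card := by
  classical
  obtain ⟨u, hu⟩ : ∃ u, u ∉ A := by
    have := hA.infinite_compl
    obtain ⟨u, hu⟩ := this.nonempty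
    exact ⟨u, hu⟩
  obtain ⟨p⟩ := hconn.preconnected z u
  obtain ⟨u', q, hu', hq⟩ := G.escape_walk (A := A) hA.toFinset p.toPath.1
    p.toPath.2 (fun v _ hvA => hA.mem_toFinset.mpr hvA) hz hu
  have key : G.surv A q.length z ≤ 1 - p0 ^ q.length := by
    have hlb : p0 ^ q.length ≤ G.Pn q.length z u' := G.Pn_walk_lb hp0.le hP0 q
    have hPnsum : Summable (fun y => G.Pn q.length z y) :=
      summable_of_ne_finset_zero (G.Pn_supp hconn q.length z)
    have hsplit := Summable.tsum_eq_add_tsum_ite hPnsum u'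
    have hle : G.surv A q.length z ≤ ∑' y, if y = u' then 0 else G.Pn q.length z y := by
      refine Summable.tsum_le_tsum (fun y => ?_) ?_ ?_
      · by_cases hy : y = u'
        · rw [if_pos hy, hy]
          by_contra hc
          push_neg at hc
          exact hu' (G.PnA_mem_of_ne_zero (by
            intro h0
            rw [h0] at hc
            exact absurd le_rfl (not_le.mpr hc)))
        · rw [if_neg hy]
          exact G.PnA_le_Pn hA q.length z y
      · exact summable_of_ne_finset_zero (G.PnA_supp hA q.length z)
      · refine Summable.of_nonneg_of_le (fun y => ?_) (fun y => ?_) hPnsum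
        · split <;> [exact le_rfl; exact G.Pn_nonneg _ z _]
        · split <;> [exact G.Pn_nonneg _ z _; exact le_rfl]
    have hsum1 : (∑' y, G.Pn q.length z y) = 1 := G.Pn_sum_eq_one hconn q.length z
    have : (∑' y, if y = u' then 0 else G.Pn q.length z y)
        = 1 - G.Pn q.length z u' := by
      rw [hsum1] at hsplit
      linarith
    rw [this] at hle
    linarith
  calc G.surv A hA.toFinset.card z ≤ G.surv A q.length z := G.surv_anti hA hq z
    _ ≤ 1 - p0 ^ q.length := key
    _ ≤ 1 - p0 ^ hA.toFinset.card := by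
        have := pow_le_pow_of_le_one hp0.le (G.p0_le_one hconn hP0 z) hq
        linarith

include hA hconn in
lemma surv_pow_le [Infinite V] {p0 : ℝ} (hp0 : 0 < p0) (hP0 : G.P0 p0)
    (hne : A.Nonempty) (j : ℕ) (z : V) :
    G.surv A (hA.toFinset.card * j) z ≤ (1 - p0 ^ hA.toFinset.card) ^ j := by
  have hcard : 1 ≤ hA.toFinset.card :=
    Finset.card_pos.mpr ⟨hne.choose, hA.mem_toFinset.mpr hne.choose_spec⟩
  have hθ0 : 0 ≤ 1 - p0 ^ hA.toFinset.card := by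
    have h1 : p0 ^ hA.toFinset.card ≤ 1 ^ hA.toFinset.card :=
      pow_le_pow_left₀ hp0.le (G.p0_le_one hconn hP0 hne.choose) _
    rw [one_pow] at h1
    linarith
  induction j with
  | zero =>
      rw [Nat.mul_zero, pow_zero]
      exact G.surv_le_one hA 0 z
  | succ j ih =>
      have hstep := G.surv_add_le hA hθ0 hcard
        (fun w hw => G.surv_card_le hA hconn hp0 hP0 hw) (hA.toFinset.card * j) z
      calc G.surv A (hA.toFinset.card * (j + 1)) z
          = G.surv A (hA.toFinset.card + hA.toFinset.card * j) z := by ring_nf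
        _ ≤ (1 - p0 ^ hA.toFinset.card) * G.surv A (hA.toFinset.card * j) z := hstep
        _ ≤ (1 - p0 ^ hA.toFinset.card) * (1 - p0 ^ hA.toFinset.card) ^ j :=
            mul_le_mul_of_nonneg_left ih hθ0
        _ = (1 - p0 ^ hA.toFinset.card) ^ (j + 1) := by ring

include hA hconn in
lemma surv_summable [Infinite V] {p0 : ℝ} (hp0 : 0 < p0) (hP0 : G.P0 p0) (z : V) :
    Summable (fun k => G.surv A k z) := by
  rcases Set.eq_empty_or_nonempty A with hAe | hne
  · refine summable_of_ne_finset_zero (s := ∅) fun k _ => ?_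
    exact G.surv_of_not_mem hA (hAe ▸ Set.notMem_empty z) k
  · set N := hA.toFinset.card with hN
    set θ := 1 - p0 ^ N with hθ
    have hcard : 1 ≤ N :=
      Finset.card_pos.mpr ⟨hne.choose, hA.mem_toFinset.mpr hne.choose_spec⟩
    have hθ0 : 0 ≤ θ := by
      have h1 : p0 ^ N ≤ 1 ^ N :=
        pow_le_pow_left₀ hp0.le (G.p0_le_one hconn hP0 hne.choose) _
      rw [one_pow] at h1
      linarith
    have hθ1 : θ < 1 := by
      have : 0 < p0 ^ N := pow_pos hp0 N
      simp only [hθ]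
      linarith
    have key : ∀ jj : ℕ, ∑ i ∈ Finset.range (N * jj), G.surv A i z
        ≤ N * ∑ j ∈ Finset.range jj, θ ^ j := by
      intro jj
      induction jj with
      | zero => simp
      | succ jj ih =>
          have hsplit : ∑ i ∈ Finset.range (N * jj), G.surv A i z
              + ∑ i ∈ Finset.Ico (N * jj) (N * (jj + 1)), G.surv A i z
              = ∑ i ∈ Finset.range (N * (jj + 1)), G.surv A i z := by
            rw [Finset.range_eq_Ico, Finset.range_eq_Ico]
            exact Finset.sum_Ico_consecutive _ (Nat.zero_le _)
              (Nat.mul_le_mul_left N (Nat.le_succ jj))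
          have hblock : ∑ i ∈ Finset.Ico (N * jj) (N * (jj + 1)), G.surv A i z
              ≤ N * θ ^ jj := by
            calc ∑ i ∈ Finset.Ico (N * jj) (N * (jj + 1)), G.surv A i z
                ≤ ∑ _i ∈ Finset.Ico (N * jj) (N * (jj + 1)), θ ^ jj := by
                  refine Finset.sum_le_sum fun i hi => ?_
                  have h1 : N * jj ≤ i := (Finset.mem_Ico.mp hi).1
                  exact (G.surv_anti hA h1 z).trans
                    (G.surv_pow_le hA hconn hp0 hP0 hne jj z)
              _ = N * θ ^ jj := by
                  rw [Finset.sum_const, Nat.card_Ico]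
                  have : N * (jj + 1) - N * jj = N := by ring_nf; omega
                  rw [this, nsmul_eq_mul]
          calc ∑ i ∈ Finset.range (N * (jj + 1)), G.surv A i z
              = ∑ i ∈ Finset.range (N * jj), G.surv A i z
                + ∑ i ∈ Finset.Ico (N * jj) (N * (jj + 1)), G.surv A i z := hsplit.symm
            _ ≤ (N : ℝ) * ∑ j ∈ Finset.range jj, θ ^ j + N * θ ^ jj :=
                add_le_add ih hblock
            _ = N * ∑ j ∈ Finset.range (jj + 1), θ ^ j := by
                rw [Finset.sum_range_succ]; ring
    have geom : ∀ jj : ℕ, ∑ j ∈ Finset.range jj, θ ^ j ≤ (1 - θ)⁻¹ := by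
      intro jj
      rw [← tsum_geometric_of_lt_one hθ0 hθ1]
      exact Summable.sum_le_tsum _ (fun i _ => pow_nonneg hθ0 i)
        (summable_geometric_of_lt_one hθ0 hθ1)
    refine summable_of_sum_range_le (c := N * (1 - θ)⁻¹)
      (fun k => G.surv_nonneg k z) (fun n => ?_)
    calc ∑ i ∈ Finset.range n, G.surv A i z
        ≤ ∑ i ∈ Finset.range (N * n), G.surv A i z := by
          refine Finset.sum_le_sum_of_subset_of_nonneg ?_
            (fun i _ _ => G.surv_nonneg i z)
          exact Finset.range_subset_range.mpr (Nat.le_mul_of_pos_left n hcard)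
      _ ≤ N * ∑ j ∈ Finset.range n, θ ^ j := key n
      _ ≤ N * (1 - θ)⁻¹ :=
          mul_le_mul_of_nonneg_left (geom n) (Nat.cast_nonneg N)

end Escape

section Mono

lemma PnA_mono {A A' : Set V} (hA' : A'.Finite) (hsub : A ⊆ A') (k : ℕ) (z y : V) :
    G.PnA A k z y ≤ G.PnA A' k z y := by
  induction k generalizing z y with
  | zero =>
      unfold PnA
      split
      · rename_i hc; rw [if_pos ⟨hc.1, hsub hc.2⟩]
      · split
        · norm_num
        · exact le_rfl
  | succ k ih =>
      refine Summable.tsum_le_tsum (fun w => ?_) ?_ ?_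
      · refine mul_le_mul ?_ (ih w y) (G.PnA_nonneg k w y) (G.PstepA_nonneg z w)
        unfold PstepA
        split
        · rename_i hc; rw [if_pos ⟨hsub hc.1, hsub hc.2⟩]
        · split
          · exact G.Pstep_nonneg z w
          · exact le_rfl
      · refine summable_of_ne_finset_zero (s := hA'.toFinset) fun w hw => ?_
        rw [G.PstepA_supp (hA'.subset hsub) z w ?_, zero_mul]
        rw [Set.Finite.mem_toFinset] at hw ⊢
        exact fun hc => hw (hsub hc)
      · refine summable_of_ne_finset_zero (s := hA'.toFinset) fun w hw => ?_
        rw [G.PstepA_supp hA' z w hw, zero_mul]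

lemma surv_set_mono {A A' : Set V} (hA' : A'.Finite) (hsub : A ⊆ A') (k : ℕ) (z : V) :
    G.surv A k z ≤ G.surv A' k z := by
  refine Summable.tsum_le_tsum (fun y => G.PnA_mono hA' hsub k z y) ?_ ?_
  · exact summable_of_ne_finset_zero (G.PnA_supp (hA'.subset hsub) k z)
  · exact summable_of_ne_finset_zero (G.PnA_supp hA' k z)

lemma meanExit_nonneg (A : Set V) (z : V) : 0 ≤ G.meanExit A z :=
  tsum_nonneg fun k => G.surv_nonneg k z

lemma meanExit_mono [Infinite V] (hconn : G.toSimpleGraph.Connected)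
    {p0 : ℝ} (hp0 : 0 < p0) (hP0 : G.P0 p0)
    {A A' : Set V} (hA' : A'.Finite) (hsub : A ⊆ A') (z : V) :
    G.meanExit A z ≤ G.meanExit A' z := by
  rw [G.meanExit_eq, G.meanExit_eq]
  have hsum' : Summable (fun k => G.surv A' k z) :=
    G.surv_summable hA' hconn hp0 hP0 z
  refine Summable.tsum_le_tsum (fun k => G.surv_set_mono hA' hsub k z) ?_ hsum'
  exact Summable.of_nonneg_of_le (fun k => G.surv_nonneg k z)
    (fun k => G.surv_set_mono hA' hsub k z) hsum'

lemma ball_mono (x : V) {r r' : ℝ} (h : r ≤ r') : G.ball x r ⊆ G.ball x r' :=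
  fun y hy => lt_of_lt_of_le hy h

lemma ball_finite (hconn : G.toSimpleGraph.Connected) (x : V) (r : ℝ) :
    (G.ball x r).Finite := by
  refine (G.distLE_finite hconn x ⌈r⌉₊).subset ?_
  intro y hy
  have h1 : (G.gdist x y : ℝ) < r := hy
  have h2 : r ≤ (⌈r⌉₊ : ℝ) := Nat.le_ceil r
  exact_mod_cast (h1.trans_le h2).le

lemma mem_ball_self (x : V) {r : ℝ} (hr : 0 < r) : x ∈ G.ball x r := by
  show (G.gdist x x : ℝ) < r
  unfold gdist
  rw [SimpleGraph.dist_self]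
  exact_mod_cast hr

lemma mexit_nonneg (x : V) (r : ℝ) : 0 ≤ G.mexit x r :=
  G.meanExit_nonneg _ x

lemma mexit_mono [Infinite V] (hconn : G.toSimpleGraph.Connected)
    {p0 : ℝ} (hp0 : 0 < p0) (hP0 : G.P0 p0) (x : V) {r r' : ℝ} (h : r ≤ r') :
    G.mexit x r ≤ G.mexit x r' :=
  G.meanExit_mono hconn hp0 hP0 (G.ball_finite hconn x r') (G.ball_mono x h) x

lemma ball_nonpos (x : V) {r : ℝ} (hr : r ≤ 0) : G.ball x r = ∅ := by
  ext y
  simp only [Set.mem_empty_iff_false, iff_false]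
  intro hy
  have h1 : (G.gdist x y : ℝ) < r := hy
  have : (0 : ℝ) ≤ (G.gdist x y : ℝ) := Nat.cast_nonneg _
  linarith

lemma meanExit_empty (z : V) : G.meanExit (∅ : Set V) z = 0 := by
  rw [G.meanExit_eq]
  have : ∀ k, G.surv (∅ : Set V) k z = 0 := fun k =>
    G.surv_of_not_mem Set.finite_empty (Set.notMem_empty z) k
  rw [tsum_congr this, tsum_zero]

lemma mexit_nonpos (x : V) {r : ℝ} (hr : r ≤ 0) : G.mexit x r = 0 := by
  unfold mexit
  rw [G.ball_nonpos x hr, G.meanExit_empty]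

lemma ball_one (hconn : G.toSimpleGraph.Connected) (x : V) :
    G.ball x (1 : ℝ) = {x} := by
  ext y
  simp only [Set.mem_singleton_iff]
  constructor
  · intro hy
    have h1 : (G.gdist x y : ℝ) < 1 := hy
    have h2 : G.gdist x y = 0 := by exact_mod_cast Nat.lt_one_iff.mp (by exact_mod_cast h1)
    exact (G.dist_zero_imp hconn h2).symm
  · intro hy
    subst hy
    exact G.mem_ball_self y one_pos

lemma mexit_one (hconn : G.toSimpleGraph.Connected) (x : V) :
    G.mexit x (1 : ℝ) = 1 := by
  unfold mexit
  rw [G.ball_one hconn]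
  rw [G.meanExit_eq]
  have hfin : ({x} : Set V).Finite := Set.finite_singleton x
  have hsucc : ∀ k, G.surv ({x} : Set V) (k + 1) x = 0 := by
    intro k
    rw [G.surv_succ hfin]
    refine Finset.sum_eq_zero fun w hw => ?_
    have hwx : w = x := by
      rw [Set.Finite.mem_toFinset] at hw
      exact hw
    subst hwx
    have : G.PstepA ({w} : Set V) w w = 0 := by
      unfold PstepA Pstep
      rw [G.w_irrefl w, zero_div, if_pos ⟨rfl, rfl⟩]
    rw [this, zero_mul]
  have hsupp : ∀ k ∉ ({0} : Finset ℕ), G.surv ({x} : Set V) k x = 0 := by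
    intro k hk
    rw [Finset.mem_singleton] at hk
    obtain ⟨k', rfl⟩ := Nat.exists_eq_succ_of_ne_zero hk
    exact hsucc k'
  rw [tsum_eq_sum hsupp, Finset.sum_singleton, G.surv_zero]
  simp

end Mono

end Helpers

end WeightedGraph

/-- **Lemma 3.13.** Under `(p0)`, `(VD)` and `(TC)`, the local sub-Gaussian kernel satisfies
`k̲ + 1 ≥ c·(E(x,R)/n)^{1/(β-1)}`. -/
theorem lker_lower_bound {V : Type*} [Countable V] [Infinite V]
    (G : WeightedGraph V) (hconn : G.toSimpleGraph.Connected)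
    (p0 : ℝ) (hp0 : 0 < p0) (hP0 : G.P0 p0) (hVD : G.VD) (hTC : G.TC) :
    ∃ c β : ℝ, 0 < c ∧ 1 < β ∧ ∀ (x : V) (n R : ℕ), 0 < n → 0 < R →
      c * (G.mexit x (R : ℝ) / (n : ℝ)) ^ ((1 : ℝ) / (β - 1)) ≤ (G.lker x n R : ℝ) + 1 := by
  classical
  obtain ⟨C, hC1, hTC'⟩ := hTC
  have hC0 : (0:ℝ) < C := lt_trans one_pos hC1
  set β0 : ℝ := Real.logb 2 C with hβ0def
  have hβ0pos : 0 < β0 := Real.logb_pos one_lt_two hC1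
  have h2β0 : (2:ℝ) ^ β0 = C := Real.rpow_logb two_pos (by norm_num) hC0
  set C' : ℝ := C ^ 2 * (2:ℝ) ^ β0 with hC'def
  have h2β0pos : (0:ℝ) < (2:ℝ) ^ β0 := Real.rpow_pos_of_pos two_pos β0
  have hC'pos : 0 < C' := mul_pos (pow_pos hC0 2) h2β0pos
  have hC'1 : (2:ℝ) ^ β0 ≤ C' := by
    have h1 : (1:ℝ) ≤ C ^ 2 := one_le_pow₀ hC1.le
    nlinarith
  -- the doubling chain
  have chain : ∀ (y : V) (T : ℝ), 0 < T → ∀ i : ℕ,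
      G.mexit y ((2:ℝ) ^ i * T) ≤ C ^ i * G.mexit y T := by
    intro y T hT i
    induction i with
    | zero => simp
    | succ i ih =>
        have hpos : 0 < (2:ℝ) ^ i * T := by positivity
        have h1 : G.mexit y ((2:ℝ) ^ (i+1) * T) ≤ C * G.mexit y ((2:ℝ) ^ i * T) := by
          have h2 := hTC' y ((2:ℝ) ^ i * T) hpos y (G.mem_ball_self y hpos)
          have h3 : (2:ℝ) ^ (i+1) * T = 2 * ((2:ℝ) ^ i * T) := by ring
          rw [h3]
          exact h2
        calc G.mexit y ((2:ℝ) ^ (i+1) * T) ≤ C * G.mexit y ((2:ℝ) ^ i * T) := h1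
          _ ≤ C * (C ^ i * G.mexit y T) := mul_le_mul_of_nonneg_left ih hC0.le
          _ = C ^ (i+1) * G.mexit y T := by ring
  have hCj : ∀ j : ℕ, (C:ℝ) ^ j = ((2:ℝ) ^ j) ^ β0 := by
    intro j
    have e1 : ((2:ℝ) ^ β0) ^ j = (2:ℝ) ^ (β0 * j) := by
      rw [← Real.rpow_natCast ((2:ℝ) ^ β0) j, ← Real.rpow_mul two_pos.le]
    have e2 : ((2:ℝ) ^ j) ^ β0 = (2:ℝ) ^ ((j:ℝ) * β0) := by
      rw [← Real.rpow_natCast (2:ℝ) j, ← Real.rpow_mul two_pos.le]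
    rw [← h2β0, e1, e2, mul_comm]
  have hp2 : ∀ M : ℕ, 1 ≤ M → 2 ^ (Nat.clog 2 M) ≤ 2 * M := by
    intro M hM
    rcases eq_or_lt_of_le hM with h1 | h1
    · rw [← h1]
      norm_num [Nat.clog_one_right]
    · have hlt := Nat.pow_pred_clog_lt_self (b := 2) one_lt_two h1
      rw [Nat.pred_eq_sub_one] at hlt
      have hpos := Nat.clog_pos (b := 2) one_lt_two h1
      have he : 2 ^ Nat.clog 2 M = 2 * 2 ^ (Nat.clog 2 M - 1) := by
        rw [← pow_succ']
        congr 1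
        omega
      omega
  refine ⟨min 1 (C' ^ (-(1/β0))), β0 + 1,
    lt_min one_pos (Real.rpow_pos_of_pos hC'pos _), by linarith, ?_⟩
  intro x n R hn hR
  have hβ1 : β0 + 1 - 1 = β0 := by ring
  rw [hβ1]
  set c : ℝ := min 1 (C' ^ (-(1/β0))) with hcdef
  have hcpos : 0 < c := lt_min one_pos (Real.rpow_pos_of_pos hC'pos _)
  have hn' : (0:ℝ) < n := by exact_mod_cast hn
  have hn1 : (1:ℝ) ≤ n := by exact_mod_cast hn
  have hR' : (0:ℝ) < R := by exact_mod_cast hR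
  set E : ℝ := G.mexit x (R:ℝ) with hEdef
  have hE0 : 0 ≤ E := G.mexit_nonneg x _
  set K : ℕ := G.lker x n R + 1 with hKdef
  have hK1 : 1 ≤ K := Nat.le_add_left 1 _
  have hK' : (1:ℝ) ≤ (K:ℝ) := by exact_mod_cast hK1
  have hKpos : (0:ℝ) < K := by linarith
  have hgoalform : (G.lker x n R : ℝ) + 1 = (K:ℝ) := by
    rw [hKdef]
    push_cast
    ring
  rw [hgoalform]
  by_cases hsmall : E ≤ n
  · -- trivial case
    have hr1 : E / n ≤ 1 := (div_le_one hn').mpr hsmall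
    have hr0 : 0 ≤ E / n := div_nonneg hE0 hn'.le
    have hre : (E / n) ^ ((1:ℝ)/β0) ≤ 1 :=
      Real.rpow_le_one hr0 hr1 (by positivity)
    calc c * (E / n) ^ ((1:ℝ)/β0) ≤ 1 * 1 :=
          mul_le_mul (min_le_left _ _) hre (by positivity) one_pos.le
      _ = 1 := by ring
      _ ≤ (K:ℝ) := hK'
  · -- main case : establish E / n ≤ C' * K ^ β0
    push_neg at hsmall
    have hEn : E / n ≤ C' * (K:ℝ) ^ β0 := by
      rcases Nat.lt_or_ge R K with hRK | hKR
      · -- K > R : crude bound E ≤ C ^ m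
        set m : ℕ := Nat.clog 2 R with hmdef
        have h2m : (R:ℝ) ≤ (2:ℝ) ^ m := by
          have := Nat.le_pow_clog one_lt_two R
          exact_mod_cast this
        have hEm : E ≤ C ^ m := by
          calc E ≤ G.mexit x ((2:ℝ) ^ m * 1) := by
                rw [mul_one]
                exact G.mexit_mono hconn hp0 hP0 x h2m
            _ ≤ C ^ m * G.mexit x 1 := chain x 1 one_pos m
            _ = C ^ m := by rw [G.mexit_one hconn, mul_one]
        have h2mK : ((2:ℝ) ^ m) ≤ 2 * (K:ℝ) := by
          have h1 : (2:ℕ) ^ m ≤ 2 * R := hp2 R hR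
          have h2 : (R:ℝ) ≤ (K:ℝ) := by exact_mod_cast hRK.le
          have h3 : ((2:ℕ)^m : ℝ) ≤ 2 * (R:ℝ) := by exact_mod_cast h1
          push_cast at h3
          linarith
        calc E / n ≤ E := div_le_self hE0 hn1
          _ ≤ C ^ m := hEm
          _ = ((2:ℝ) ^ m) ^ β0 := hCj m
          _ ≤ (2 * (K:ℝ)) ^ β0 :=
              Real.rpow_le_rpow (by positivity) h2mK hβ0pos.le
          _ = (2:ℝ) ^ β0 * (K:ℝ) ^ β0 := Real.mul_rpow (by norm_num) hKpos.le
          _ ≤ C' * (K:ℝ) ^ β0 :=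
              mul_le_mul_of_nonneg_right hC'1 (Real.rpow_nonneg hKpos.le _)
      · -- K ≤ R : use maximality of lker
        set r : ℕ := R / K with hrdef
        have hr1 : 1 ≤ r := (Nat.one_le_div_iff (by omega)).mpr hKR
        have hr' : (0:ℝ) < r := by exact_mod_cast hr1
        haveI hball : Nonempty (G.ball x (R:ℝ)) := ⟨⟨x, G.mem_ball_self x hR'⟩⟩
        -- boundedness of the defining set
        have hbdd : BddAbove {k : ℕ | 1 ≤ k ∧ (n:ℝ)/(k:ℝ)
            ≤ ⨅ y : G.ball x (R:ℝ), G.mexit y.1 ((R/k : ℕ):ℝ)} := by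
          refine ⟨R, fun k hk => ?_⟩
          by_contra hc
          push_neg at hc
          have hdiv : R / k = 0 := Nat.div_eq_of_lt hc
          have hzero : ∀ y : G.ball x (R:ℝ), G.mexit y.1 ((R/k : ℕ):ℝ) = 0 := by
            intro y
            rw [hdiv]
            exact G.mexit_nonpos y.1 (by norm_num)
          have hinf : (⨅ y : G.ball x (R:ℝ), G.mexit y.1 ((R/k : ℕ):ℝ)) = 0 := by
            exact (iInf_congr hzero).trans ciInf_const
          have hkpos : (0:ℝ) < k := by
            have := hk.1
            exact_mod_cast Nat.lt_of_lt_of_le Nat.zero_lt_one this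
          have hnk : 0 < (n:ℝ)/(k:ℝ) := div_pos hn' hkpos
          have hk2 : (n:ℝ)/(k:ℝ) ≤ ⨅ y : G.ball x (R:ℝ), G.mexit y.1 ((R/k : ℕ):ℝ) :=
            hk.2
          rw [hinf] at hk2
          linarith
        have hKnot : K ∉ {k : ℕ | 1 ≤ k ∧ (n:ℝ)/(k:ℝ)
            ≤ ⨅ y : G.ball x (R:ℝ), G.mexit y.1 ((R/k : ℕ):ℝ)} := by
          intro hmem
          have := le_csSup hbdd hmem
          have hKs : K ≤ G.lker x n R := this
          omega
        have hlt : (⨅ y : G.ball x (R:ℝ), G.mexit y.1 ((r : ℕ):ℝ)) < (n:ℝ)/(K:ℝ) := by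
          by_contra hc
          push_neg at hc
          exact hKnot ⟨hK1, hc⟩
        obtain ⟨⟨y0, hy0mem⟩, hy0⟩ := exists_lt_of_ciInf_lt hlt
        -- set up the chain from x through y0
        set m : ℕ := Nat.clog 2 K + 1 with hmdef
        have h2mK : 2 * K ≤ 2 ^ m := by
          have := Nat.le_pow_clog one_lt_two K
          calc 2 * K ≤ 2 * 2 ^ (Nat.clog 2 K) := by omega
            _ = 2 ^ m := by rw [hmdef, pow_succ]; ring
        have hRS : (R:ℝ) < (2:ℝ) ^ m * r := by
          have h1 : R < (r + 1) * K := by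
            have := Nat.lt_succ_self r
            exact (Nat.div_lt_iff_lt_mul (by omega : 0 < K)).mp (by omega)
          have h2 : (r + 1) * K ≤ 2 * r * K := by nlinarith [hr1]
          have h3 : 2 * r * K = r * (2 * K) := by ring
          have h4 : r * (2 * K) ≤ r * 2 ^ m := Nat.mul_le_mul_left r h2mK
          have h5 : R < r * 2 ^ m := by omega
          have h6 : ((r * 2 ^ m : ℕ) : ℝ) = (2:ℝ) ^ m * r := by push_cast; ring
          calc (R:ℝ) < ((r * 2 ^ m : ℕ) : ℝ) := by exact_mod_cast h5
            _ = (2:ℝ) ^ m * r := h6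
        have hS0pos : (0:ℝ) < (2:ℝ) ^ m * r := by positivity
        have hy0ball : y0 ∈ G.ball x ((2:ℝ) ^ m * r) := by
          have h1 : (G.gdist x y0 : ℝ) < R := hy0mem
          exact lt_trans h1 hRS
        have hEchain : E ≤ C ^ (m + 1) * G.mexit y0 (r:ℝ) := by
          calc E ≤ G.mexit x (2 * ((2:ℝ) ^ m * r)) :=
                G.mexit_mono hconn hp0 hP0 x (by linarith)
            _ ≤ C * G.mexit y0 ((2:ℝ) ^ m * r) := hTC' x _ hS0pos y0 hy0ball
            _ ≤ C * (C ^ m * G.mexit y0 (r:ℝ)) :=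
                mul_le_mul_of_nonneg_left (chain y0 (r:ℝ) hr' m) hC0.le
            _ = C ^ (m + 1) * G.mexit y0 (r:ℝ) := by ring
        have hElt : E ≤ C ^ (m + 1) * ((n:ℝ)/(K:ℝ)) := by
          refine hEchain.trans ?_
          exact mul_le_mul_of_nonneg_left hy0.le (by positivity)
        have hEdivn : E / n ≤ C ^ (m + 1) / (K:ℝ) := by
          rw [div_le_div_iff₀ hn' hKpos]
          have h7 := mul_le_mul_of_nonneg_right hElt hKpos.le
          have h8 : C ^ (m + 1) * ((n:ℝ)/(K:ℝ)) * (K:ℝ) = C ^ (m + 1) * n := by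
            field_simp
          linarith
        -- bound C ^ (m+1)
        have hCm1 : C ^ (m + 1) ≤ C' * (K:ℝ) ^ β0 := by
          have h1 : C ^ (m + 1) = C ^ 2 * C ^ (Nat.clog 2 K) := by
            rw [hmdef]; ring
          have h2 : (C:ℝ) ^ (Nat.clog 2 K) = ((2:ℝ) ^ (Nat.clog 2 K)) ^ β0 := hCj _
          have h3 : ((2:ℝ) ^ (Nat.clog 2 K)) ≤ 2 * (K:ℝ) := by
            have := hp2 K hK1
            exact_mod_cast this
          have h4 : ((2:ℝ) ^ (Nat.clog 2 K)) ^ β0 ≤ (2 * (K:ℝ)) ^ β0 :=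
            Real.rpow_le_rpow (by positivity) h3 hβ0pos.le
          have h5 : (2 * (K:ℝ)) ^ β0 = (2:ℝ) ^ β0 * (K:ℝ) ^ β0 :=
            Real.mul_rpow (by norm_num) hKpos.le
          calc C ^ (m+1) = C ^ 2 * C ^ (Nat.clog 2 K) := h1
            _ ≤ C ^ 2 * ((2:ℝ) ^ β0 * (K:ℝ) ^ β0) := by
                refine mul_le_mul_of_nonneg_left ?_ (by positivity)
                rw [h2]
                exact h4.trans_eq h5
            _ = C' * (K:ℝ) ^ β0 := by rw [hC'def]; ring
        calc E / n ≤ C ^ (m+1) / (K:ℝ) := hEdivn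
          _ ≤ C ^ (m+1) := div_le_self (by positivity) hK'
          _ ≤ C' * (K:ℝ) ^ β0 := hCm1
    -- conclude from hEn
    have h1 : (E/n) ^ ((1:ℝ)/β0) ≤ (C' * (K:ℝ) ^ β0) ^ ((1:ℝ)/β0) :=
      Real.rpow_le_rpow (div_nonneg hE0 hn'.le) hEn (by positivity)
    have h2 : (C' * (K:ℝ) ^ β0) ^ ((1:ℝ)/β0) = C' ^ ((1:ℝ)/β0) * (K:ℝ) := by
      rw [Real.mul_rpow hC'pos.le (Real.rpow_nonneg hKpos.le _),
        ← Real.rpow_mul hKpos.le]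
      rw [mul_one_div, div_self hβ0pos.ne', Real.rpow_one]
    calc c * (E/n) ^ ((1:ℝ)/β0)
        ≤ C' ^ (-(1/β0)) * (C' ^ ((1:ℝ)/β0) * (K:ℝ)) := by
          refine mul_le_mul (min_le_right _ _) (h1.trans_eq h2) (by positivity)
            (Real.rpow_pos_of_pos hC'pos _).le
      _ = (K:ℝ) := by
          rw [← mul_assoc, ← Real.rpow_add hC'pos]
          norm_num
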